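/- Assume t ≥ 2 and that ArchTrop(f) has exactly ℓ elements. Then for every σ ∈ ArchTrop(f) there exists a root ζ ∈ ℂ∖{0} of f with |σ − log|ζ|| ≤ (2ℓ − 1)·log(t−1). -/

import Mathlib

/-- Evaluation of the univariate polynomial `f(x) = ∑ i, c i * x^{a i}` (with integer
exponents) at `x ∈ ℂ∖{0}`. -/
noncomputable def upoly {t : ℕ} (c : Fin t → ℂ) (a : Fin t → ℤ) (x : ℂ) : ℂ :=
  ∑ i, c i * x ^ a i

/-- `|c_i| e^{a_i v}`, the `i`-th tropical term of `f` at `v ∈ ℝ`. -/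
noncomputable def tropTerm1 {t : ℕ} (c : Fin t → ℂ) (a : Fin t → ℤ) (v : ℝ) (i : Fin t) : ℝ :=
  ‖c i‖ * Real.exp ((a i : ℝ) * v)

/-- `ArchTrop(f) ⊆ ℝ`: the set of `v` where the maximum of `|c_i| e^{a_i v}` is attained
at least twice. -/
noncomputable def ArchTrop1 {t : ℕ} (c : Fin t → ℂ) (a : Fin t → ℤ) : Set ℝ :=
  {v | ∃ i k : Fin t, i ≠ k ∧ (∀ l, tropTerm1 c a v l ≤ tropTerm1 c a v i) ∧
      tropTerm1 c a v i = tropTerm1 c a v k}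

open Polynomial Complex Metric Set Finset

noncomputable section

local notation "π" => Real.pi

lemma aux_diff_prod (M : Multiset ℂ) :
    Differentiable ℂ (fun z => (M.map (fun ζ => z - ζ)).prod) := by
  induction M using Multiset.induction_on with
  | empty => simp only [Multiset.map_zero, Multiset.prod_zero]; exact differentiable_const 1
  | cons ζ M ih =>
      simp only [Multiset.map_cons, Multiset.prod_cons]
      exact (differentiable_id.sub_const ζ).mul ih

lemma aux_logDeriv_prod (M : Multiset ℂ) (z : ℂ) (hz : ∀ ζ ∈ M, z ≠ ζ) :
    logDeriv (fun z => (M.map (fun ζ => z - ζ)).prod) z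
      = (M.map (fun ζ => (z - ζ)⁻¹)).sum := by
  induction M using Multiset.induction_on with
  | empty =>
      simp only [Multiset.map_zero, Multiset.prod_zero, Multiset.sum_zero]
      exact congrFun (logDeriv_const (1:ℂ)) z
  | cons ζ M ih =>
      have hne : z - ζ ≠ 0 := sub_ne_zero.2 (hz ζ (Multiset.mem_cons_self _ _))
      have hprodne : (M.map (fun ζ => z - ζ)).prod ≠ 0 := by
        intro h0
        rcases Multiset.prod_eq_zero_iff.1 h0 with hmem
        rcases Multiset.mem_map.1 hmem with ⟨w, hw, hval⟩
        exact sub_ne_zero.2 (hz w (Multiset.mem_cons_of_mem hw)) hval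
      simp only [Multiset.map_cons, Multiset.prod_cons, Multiset.sum_cons]
      have hmul := logDeriv_mul (f := fun z => z - ζ)
        (g := fun z => (M.map (fun ζ => z - ζ)).prod) z hne hprodne
        ((differentiable_id.sub_const ζ)).differentiableAt (aux_diff_prod M).differentiableAt
      rw [hmul, ih (fun w hw => hz w (Multiset.mem_cons_of_mem hw))]
      congr 1
      have : logDeriv (fun z => z - ζ) z = 1 / (z - ζ) := by
        rw [logDeriv_apply, deriv_sub_const, deriv_id'']
      rw [this, one_div]

lemma aux_circleIntegrable_invsum (M : Multiset ℂ) (r : ℝ)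
    (hM : ∀ ζ ∈ M, ‖ζ‖ ≠ r) (hr : 0 < r) :
    CircleIntegrable (fun z => ((M.map (fun ζ => (z - ζ)⁻¹)).sum)) 0 r := by
  induction M using Multiset.induction_on with
  | empty =>
      simp only [Multiset.map_zero, Multiset.sum_zero]
      exact circleIntegrable_const (0:ℂ) (0:ℂ) r
  | cons ζ M ih =>
      simp only [Multiset.map_cons, Multiset.sum_cons]
      have h1 : CircleIntegrable (fun z => (z - ζ)⁻¹) 0 r := by
        rw [circleIntegrable_sub_inv_iff]
        right
        simp only [mem_sphere_iff_norm, sub_zero]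
        rw [abs_of_pos hr]
        exact fun h => hM ζ (Multiset.mem_cons_self _ _) h
      exact h1.add (ih (fun w hw => hM w (Multiset.mem_cons_of_mem hw)))

lemma aux_integral_invsum (M : Multiset ℂ) (r : ℝ) (hr : 0 < r)
    (hM : ∀ ζ ∈ M, ‖ζ‖ ≠ r) :
    (∮ z in C(0, r), ((M.map (fun ζ => (z - ζ)⁻¹)).sum))
      = (2 * π * I) * ((M.filter (fun z => ‖z‖ < r)).card : ℂ) := by
  induction M using Multiset.induction_on with
  | empty => simp [circleIntegral]
  | cons ζ M ih =>
      have hζ : ‖ζ‖ ≠ r := hM ζ (Multiset.mem_cons_self _ _)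
      have hM' : ∀ w ∈ M, ‖w‖ ≠ r := fun w hw => hM w (Multiset.mem_cons_of_mem hw)
      have int1 : CircleIntegrable (fun z => (z - ζ)⁻¹) 0 r := by
        rw [circleIntegrable_sub_inv_iff]
        right
        simp only [mem_sphere_iff_norm, sub_zero]
        rw [abs_of_pos hr]
        exact fun h => hζ h
      have intS := aux_circleIntegrable_invsum M r hM' hr
      simp only [Multiset.map_cons, Multiset.sum_cons]
      have hsplit : (∮ z in C(0,r), ((z - ζ)⁻¹ + (M.map (fun ζ => (z - ζ)⁻¹)).sum))
          = (∮ z in C(0,r), (z - ζ)⁻¹)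
            + ∮ z in C(0,r), (M.map (fun ζ => (z - ζ)⁻¹)).sum := by
        simp only [circleIntegral, smul_add]
        exact intervalIntegral.integral_add int1.out intS.out
      rw [hsplit, ih hM']
      have hval : (∮ z in C(0, r), (z - ζ)⁻¹)
          = if ‖ζ‖ < r then (2 * π * I) else 0 := by
        by_cases hlt : ‖ζ‖ < r
        · rw [if_pos hlt]
          exact circleIntegral.integral_sub_inv_of_mem_ball
            (by simpa [mem_ball, Complex.dist_eq] using hlt)
        · rw [if_neg hlt]
          have hgt : r < ‖ζ‖ := lt_of_le_of_ne (not_lt.1 hlt) (Ne.symm hζ)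
          refine circleIntegral_eq_zero_of_differentiable_on_off_countable hr.le
            Set.countable_empty ?_ ?_
          · intro z hz
            have : z ≠ ζ := by
              intro h; subst h
              exact absurd (by simpa [Complex.dist_eq] using mem_closedBall.1 hz) (not_le.2 hgt)
            exact ((continuous_id.sub continuous_const).continuousAt.continuousWithinAt).inv₀
              (sub_ne_zero.2 this)
          · intro z hz
            have : z ≠ ζ := by
              intro h; subst h
              have := mem_ball.1 hz.1
              rw [Complex.dist_eq, sub_zero] at this
              exact absurd this (not_lt.2 hgt.le)
            exact (differentiableAt_id.sub_const ζ).inv (sub_ne_zero.2 this)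
      rw [hval, Multiset.filter_cons]
      by_cases hlt : ‖ζ‖ < r
      · simp only [if_pos hlt, Multiset.card_add, Multiset.filter_singleton, hlt, if_true,
          Multiset.card_singleton]
        push_cast
        ring
      · simp only [if_neg hlt, Multiset.card_add, Multiset.filter_singleton, hlt, if_false,
          Multiset.card_zero]
        push_cast
        ring


section Rouche

lemma rouche_count (g : Polynomial ℂ) (b : ℂ) (hb : b ≠ 0) (m : ℕ) (r : ℝ) (hr : 0 < r)
    (hdom : ∀ z : ℂ, ‖z‖ = r →
      ‖g.eval z - b * z ^ m‖ < ‖b * z ^ m‖) :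
    (g.roots.filter (fun z => ‖z‖ < r)).card = m := by
  classical
  set h : Polynomial ℂ := g - Polynomial.C b * Polynomial.X ^ m with hh
  set u : ℝ → ℝ := fun s => max 0 (min s 1) with hu
  have hu0 : ∀ s, 0 ≤ u s := fun s => le_max_left _ _
  have hu1 : ∀ s, u s ≤ 1 := fun s => max_le (by norm_num) (min_le_right _ _)
  have hucont : Continuous u := continuous_const.max (continuous_id.min continuous_const)
  set P : ℝ → Polynomial ℂ := fun s => Polynomial.C b * Polynomial.X ^ m
      + Polynomial.C ((u s : ℝ) : ℂ) * h with hP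
  have evalP : ∀ s z, (P s).eval z = b * z ^ m + ((u s : ℝ) : ℂ) * h.eval z := by
    intro s z; simp [hP]
  have hevalh : ∀ z : ℂ, ‖z‖ = r →
      ‖h.eval z‖ < ‖b * z ^ m‖ := by
    intro z hz
    have : h.eval z = g.eval z - b * z ^ m := by simp [hh]
    rw [this]; exact hdom z hz
  have key : ∀ s z, ‖z‖ = r → (P s).eval z ≠ 0 := by
    intro s z hz heq
    rw [evalP] at heq
    have h1 : ‖((u s : ℝ) : ℂ) * h.eval z‖ ≤ ‖h.eval z‖ := by
      rw [norm_mul]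
      have hle : ‖((u s : ℝ) : ℂ)‖ ≤ 1 := by
        rw [Complex.norm_real, Real.norm_eq_abs, _root_.abs_of_nonneg (hu0 s)]; exact hu1 s
      nlinarith [norm_nonneg (h.eval z)]
    have h2 : ‖b * z ^ m‖ = ‖((u s : ℝ) : ℂ) * h.eval z‖ := by
      rw [show b * z ^ m = -(((u s : ℝ) : ℂ) * h.eval z) by linear_combination heq,
        norm_neg]
    have h3 := hevalh z hz
    linarith
  have habsr : ‖((r : ℝ) : ℂ)‖ = r := by
    rw [Complex.norm_real, Real.norm_eq_abs, abs_of_pos hr]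
  have hPne : ∀ s, P s ≠ 0 := by
    intro s h0
    exact key s ((r : ℝ) : ℂ) habsr (by rw [h0]; simp)
  have hroots_ne : ∀ s, ∀ ζ ∈ (P s).roots, ‖ζ‖ ≠ r := by
    intro s ζ hζ habs
    exact key s ζ habs ((Polynomial.mem_roots (hPne s)).1 hζ)
  set N : ℝ → ℕ := fun s => ((P s).roots.filter (fun z => ‖z‖ < r)).card with hN
  set W : ℝ → ℂ := fun s => ∮ z in C(0, r), logDeriv (fun z => (P s).eval z) z with hW
  -- evaluation of the winding integral
  have hWN : ∀ s, W s = (2 * π * I) * (N s : ℂ) := by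
    intro s
    set q := P s with hq
    have hlc : q.leadingCoeff ≠ 0 := Polynomial.leadingCoeff_ne_zero.2 (hPne s)
    have hfact : (fun z => q.eval z)
        = fun z => q.leadingCoeff * ((q.roots.map (fun ζ => z - ζ)).prod) := by
      funext z
      conv_lhs => rw [(IsAlgClosed.splits q).eq_prod_roots]
      rw [Polynomial.eval_mul, Polynomial.eval_C, Polynomial.eval_multiset_prod,
        Multiset.map_map]
      have hmc : ∀ ζ ∈ q.roots, (eval z ∘ fun a => X - C a) ζ = z - ζ := by
        intro ζ _; simp [Function.comp]
      rw [Multiset.map_congr rfl hmc]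
    have hEq : Set.EqOn (fun z => logDeriv (fun z => q.eval z) z)
        (fun z => ((q.roots.map (fun ζ => (z - ζ)⁻¹)).sum)) (sphere 0 r) := by
      intro z hz
      have hzr : ‖z‖ = r := by
        simpa [Complex.dist_eq] using (mem_sphere.1 hz)
      have hzroot : ∀ ζ ∈ q.roots, z ≠ ζ := by
        intro ζ hζ hzζ
        exact hroots_ne s ζ hζ (hzζ ▸ hzr)
      simp only
      rw [hfact, logDeriv_const_mul z q.leadingCoeff hlc, aux_logDeriv_prod _ _ hzroot]
    have : W s = ∮ z in C(0, r), ((q.roots.map (fun ζ => (z - ζ)⁻¹)).sum) :=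
      circleIntegral.integral_congr hr.le hEq
    rw [this, aux_integral_invsum _ _ hr (hroots_ne s)]
  -- continuity of the winding integral
  have hWexp : W = fun s => ∫ θ in (0:ℝ)..(2 * π),
      (circleMap 0 r θ * I) •
        (((Polynomial.derivative (Polynomial.C b * Polynomial.X ^ m)).eval (circleMap 0 r θ)
            + ((u s : ℝ) : ℂ) * (Polynomial.derivative h).eval (circleMap 0 r θ))
          / (b * (circleMap 0 r θ) ^ m + ((u s : ℝ) : ℂ) * h.eval (circleMap 0 r θ))) := by
    funext s
    rw [hW]
    simp only [circleIntegral]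
    apply intervalIntegral.integral_congr
    intro θ _
    simp only [deriv_circleMap]
    congr 1
    rw [logDeriv_apply]
    have hderiv : deriv (fun z => (P s).eval z) (circleMap 0 r θ)
        = (Polynomial.derivative (P s)).eval (circleMap 0 r θ) := Polynomial.deriv _
    rw [hderiv]
    congr 1
    · rw [hP]
      simp only [Polynomial.derivative_add, Polynomial.derivative_C_mul, Polynomial.eval_add,
        Polynomial.eval_mul, Polynomial.eval_C]
    · exact evalP s _
  have hWcont : Continuous W := by
    rw [hWexp]
    apply intervalIntegral.continuous_parametric_intervalIntegral_of_continuous'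
    have hden : ∀ p : ℝ × ℝ,
        b * (circleMap 0 r p.2) ^ m + ((u p.1 : ℝ) : ℂ) * h.eval (circleMap 0 r p.2) ≠ 0 := by
      intro p
      have habs : ‖circleMap 0 r p.2‖ = r := by
        rw [norm_circleMap_zero, abs_of_pos hr]
      have := key p.1 (circleMap 0 r p.2) habs
      rwa [evalP] at this
    simp only [Function.uncurry_def]
    apply Continuous.fun_smul
    · exact ((continuous_circleMap 0 r).comp continuous_snd).mul continuous_const
    · apply Continuous.div
      · apply Continuous.add
        · exact (Polynomial.continuous _).comp ((continuous_circleMap 0 r).comp continuous_snd)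
        · exact (Complex.continuous_ofReal.comp (hucont.comp continuous_fst)).mul
            ((Polynomial.continuous _).comp ((continuous_circleMap 0 r).comp continuous_snd))
      · apply Continuous.add
        · exact continuous_const.mul
            (((continuous_circleMap 0 r).comp continuous_snd).pow m)
        · exact (Complex.continuous_ofReal.comp (hucont.comp continuous_fst)).mul
            ((Polynomial.continuous _).comp ((continuous_circleMap 0 r).comp continuous_snd))
      · exact hden
  have h2πI : (2 * (π:ℂ) * I) ≠ 0 := by
    simp [Real.pi_ne_zero, Complex.I_ne_zero, Complex.ofReal_ne_zero]
  set φ : ℝ → ℝ := fun s => ((W s) / (2 * π * I)).re with hφdef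
  have hφcont : Continuous φ := Complex.continuous_re.comp (hWcont.div_const _)
  have hφ : ∀ s, φ s = (N s : ℝ) := by
    intro s
    rw [hφdef]
    simp only
    rw [hWN s, mul_comm, mul_div_assoc, div_self h2πI, mul_one]
    exact Complex.natCast_re _
  -- endpoints
  have hu00 : u 0 = 0 := by simp [hu]
  have hu11 : u 1 = 1 := by simp [hu]
  have hP0 : P 0 = Polynomial.C b * Polynomial.X ^ m := by
    rw [hP]; simp [hu00]
  have hP1 : P 1 = g := by
    rw [hP]; simp only [hu11]
    push_cast
    rw [map_one, one_mul, hh]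
    ring
  have hN0 : N 0 = m := by
    rw [hN]
    simp only [hP0]
    rw [Polynomial.roots_C_mul _ hb, Polynomial.roots_pow, Polynomial.roots_X,
      Multiset.nsmul_singleton]
    rw [Multiset.filter_eq_self.2]
    · exact Multiset.card_replicate _ _
    · intro a ha
      rw [Multiset.eq_of_mem_replicate ha]
      simpa using hr
  have hN1 : N 1 = (g.roots.filter (fun z => ‖z‖ < r)).card := by
    rw [hN]; simp only [hP1]
  -- intermediate value argument
  rw [← hN1]
  by_contra hne
  have hne' : N 1 ≠ N 0 := by rw [hN0]; exact hne
  set K : ℕ := max (N 0) (N 1) with hK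
  have hKmin : min (N 0) (N 1) + 1 ≤ K := by omega
  have hymem : ((K : ℝ) - 1/2) ∈ Set.uIcc (φ 0) (φ 1) := by
    rw [hφ 0, hφ 1, Set.mem_uIcc]
    rcases le_total (N 0) (N 1) with hle | hle
    · left
      constructor
      · have : (N 0 : ℝ) + 1 ≤ K := by
          have : N 0 + 1 ≤ K := by omega
          exact_mod_cast this
        linarith
      · have : (N 1 : ℝ) = K := by
          have : N 1 = K := by omega
          exact_mod_cast this
        linarith
    · right
      constructor
      · have : (N 1 : ℝ) + 1 ≤ K := by
          have : N 1 + 1 ≤ K := by omega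
          exact_mod_cast this
        linarith
      · have : (N 0 : ℝ) = K := by
          have : N 0 = K := by omega
          exact_mod_cast this
        linarith
  obtain ⟨s, _, hs⟩ := intermediate_value_uIcc hφcont.continuousOn hymem
  rw [hφ s] at hs
  rcases le_or_gt K (N s) with hge | hlt
  · have : (K : ℝ) ≤ (N s : ℝ) := by exact_mod_cast hge
    linarith
  · have : (N s : ℝ) + 1 ≤ (K : ℝ) := by exact_mod_cast hlt
    linarith

end Rouche

end

section Trop

variable {t : ℕ} (c : Fin t → ℂ) (a : Fin t → ℤ)

lemma tropTerm1_pos (hc : ∀ i, c i ≠ 0) (v : ℝ) (i : Fin t) : 0 < tropTerm1 c a v i :=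
  mul_pos (norm_pos_iff.2 (hc i)) (Real.exp_pos _)

lemma tropTerm1_shift (v u : ℝ) (i : Fin t) :
    tropTerm1 c a v i = tropTerm1 c a u i * Real.exp ((a i : ℝ) * (v - u)) := by
  unfold tropTerm1
  rw [mul_assoc, ← Real.exp_add]
  ring_nf

lemma tropTerm1_continuous (i : Fin t) : Continuous (fun v => tropTerm1 c a v i) :=
  continuous_const.mul (Real.continuous_exp.comp (continuous_const.mul continuous_id))

/-- On an interval free of `ArchTrop` points there is one index strictly dominating. -/
lemma exists_strict_argmax (ht : 0 < t) (hc : ∀ i, c i ≠ 0) (v d : ℝ) (hd : 0 < d)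
    (hgap : ∀ x ∈ ArchTrop1 c a, x ∉ Set.Ioo (v - d) (v + d)) :
    ∃ i, ∀ w ∈ Set.Ioo (v - d) (v + d), ∀ j, j ≠ i →
      tropTerm1 c a w j < tropTerm1 c a w i := by
  classical
  haveI : Nonempty (Fin t) := ⟨⟨0, ht⟩⟩
  set J := Set.Ioo (v - d) (v + d) with hJ
  set S : Fin t → Set ℝ := fun i =>
    J ∩ ⋂ j ∈ Finset.univ.erase i, {w | tropTerm1 c a w j < tropTerm1 c a w i} with hS
  have hSopen : ∀ i, IsOpen (S i) := by
    intro i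
    exact isOpen_Ioo.inter (isOpen_biInter_finset (fun j _ =>
      isOpen_lt (tropTerm1_continuous c a j) (tropTerm1_continuous c a i)))
  have hScover : ∀ w ∈ J, ∃ i, w ∈ S i := by
    intro w hw
    obtain ⟨i, -, hi⟩ := Finset.exists_max_image Finset.univ (fun i => tropTerm1 c a w i)
      ⟨Classical.arbitrary (Fin t), Finset.mem_univ _⟩
    refine ⟨i, hw, ?_⟩
    simp only [Set.mem_iInter]
    intro j hj
    have hji : j ≠ i := (Finset.mem_erase.1 hj).1
    rcases lt_or_eq_of_le (hi j (Finset.mem_univ j)) with hlt | heq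
    · exact hlt
    · exact absurd (hgap w ⟨i, j, hji.symm, fun l => hi l (Finset.mem_univ l), heq.symm⟩) (by
        intro hnot; exact hnot hw)
  have hvJ : v ∈ J := Set.mem_Ioo.2 ⟨by linarith, by linarith⟩
  obtain ⟨i₀, hi₀⟩ := hScover v hvJ
  have hdisj : Disjoint (S i₀) (⋃ j, ⋃ (_ : j ≠ i₀), S j) := by
    rw [Set.disjoint_iUnion_right]
    intro j
    rw [Set.disjoint_iUnion_right]
    intro hj
    rw [Set.disjoint_left]
    intro w hw hw'
    have h1 : tropTerm1 c a w j < tropTerm1 c a w i₀ := by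
      have := hw.2
      simp only [Set.mem_iInter] at this
      exact this j (Finset.mem_erase.2 ⟨hj, Finset.mem_univ _⟩)
    have h2 : tropTerm1 c a w i₀ < tropTerm1 c a w j := by
      have := hw'.2
      simp only [Set.mem_iInter] at this
      exact this i₀ (Finset.mem_erase.2 ⟨Ne.symm hj, Finset.mem_univ _⟩)
    linarith
  have hcov : J ⊆ S i₀ ∪ ⋃ j, ⋃ (_ : j ≠ i₀), S j := by
    intro w hw
    obtain ⟨i, hi⟩ := hScover w hw
    by_cases hii : i = i₀
    · exact Or.inl (hii ▸ hi)
    · exact Or.inr (Set.mem_iUnion.2 ⟨i, Set.mem_iUnion.2 ⟨hii, hi⟩⟩)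
  have hJsub : J ⊆ S i₀ :=
    IsPreconnected.subset_left_of_subset_union (hSopen i₀)
      (isOpen_iUnion (fun j => isOpen_iUnion (fun _ => hSopen j))) hdisj hcov
      ⟨v, hvJ, hi₀⟩ isPreconnected_Ioo
  refine ⟨i₀, fun w hw j hj => ?_⟩
  have := (hJsub hw).2
  simp only [Set.mem_iInter] at this
  exact this j (Finset.mem_erase.2 ⟨hj, Finset.mem_univ _⟩)

/-- quantitative dominance: a non-maximal term is exponentially smaller. -/
lemma dominance (ha : StrictMono a) (hc : ∀ i, c i ≠ 0) (v d : ℝ) (hd : 0 < d)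
    (i : Fin t) (hi : ∀ w ∈ Set.Ioo (v - d) (v + d), ∀ j, j ≠ i →
      tropTerm1 c a w j < tropTerm1 c a w i)
    (d' : ℝ) (hd'0 : 0 ≤ d') (hd' : d' < d) (j : Fin t) (hj : j ≠ i) :
    tropTerm1 c a v j ≤ tropTerm1 c a v i * Real.exp (-d') := by
  have haij : a j ≠ a i := fun h => hj (ha.injective h)
  set d'' : ℝ := (d' + d) / 2 with hd''
  have hd''1 : d' < d'' := by rw [hd'']; linarith
  have hd''2 : d'' < d := by rw [hd'']; linarith
  have hd''0 : 0 < d'' := by linarith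
  rcases lt_or_gt_of_ne haij with hlt | hgt
  · -- a j < a i : compare at w = v - d''
    set w := v - d'' with hw
    have hwJ : w ∈ Set.Ioo (v - d) (v + d) := Set.mem_Ioo.2 ⟨by simp only [hw]; linarith,
      by simp only [hw]; linarith⟩
    have hcomp := le_of_lt (hi w hwJ j hj)
    have hvj : tropTerm1 c a v j = tropTerm1 c a w j * Real.exp ((a j : ℝ) * d'') := by
      rw [tropTerm1_shift c a v w j, hw]; ring_nf
    have hvi : tropTerm1 c a v i = tropTerm1 c a w i * Real.exp ((a i : ℝ) * d'') := by
      rw [tropTerm1_shift c a v w i, hw]; ring_nf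
    have hexp : Real.exp ((a j : ℝ) * d'') ≤ Real.exp ((a i : ℝ) * d'') * Real.exp (-d') := by
      rw [← Real.exp_add, Real.exp_le_exp]
      have hjialt : (a j : ℝ) ≤ (a i : ℝ) - 1 := by
        have hz : a j + 1 ≤ a i := hlt
        have : ((a j : ℝ)) + 1 ≤ (a i : ℝ) := by exact_mod_cast hz
        linarith
      nlinarith
    calc tropTerm1 c a v j = tropTerm1 c a w j * Real.exp ((a j : ℝ) * d'') := hvj
      _ ≤ tropTerm1 c a w i * (Real.exp ((a i : ℝ) * d'') * Real.exp (-d')) := by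
          have h1 := (Real.exp_pos ((a j : ℝ) * d'')).le
          have h2 := (tropTerm1_pos c a hc w i).le
          calc tropTerm1 c a w j * Real.exp ((a j : ℝ) * d'')
              ≤ tropTerm1 c a w i * Real.exp ((a j : ℝ) * d'') :=
                mul_le_mul_of_nonneg_right hcomp h1
            _ ≤ tropTerm1 c a w i * (Real.exp ((a i : ℝ) * d'') * Real.exp (-d')) :=
                mul_le_mul_of_nonneg_left hexp h2
      _ = tropTerm1 c a v i * Real.exp (-d') := by rw [hvi]; ring
  · -- a j > a i : compare at w = v + d''
    set w := v + d'' with hw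
    have hwJ : w ∈ Set.Ioo (v - d) (v + d) := Set.mem_Ioo.2 ⟨by simp only [hw]; linarith,
      by simp only [hw]; linarith⟩
    have hcomp := le_of_lt (hi w hwJ j hj)
    have hvj : tropTerm1 c a v j = tropTerm1 c a w j * Real.exp (-((a j : ℝ) * d'')) := by
      rw [tropTerm1_shift c a v w j, hw]; ring_nf
    have hvi : tropTerm1 c a v i = tropTerm1 c a w i * Real.exp (-((a i : ℝ) * d'')) := by
      rw [tropTerm1_shift c a v w i, hw]; ring_nf
    have hexp : Real.exp (-((a j : ℝ) * d'')) ≤ Real.exp (-((a i : ℝ) * d'')) * Real.exp (-d') := by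
      rw [← Real.exp_add, Real.exp_le_exp]
      have hjialt : (a i : ℝ) ≤ (a j : ℝ) - 1 := by
        have hz : a i + 1 ≤ a j := hgt
        have : ((a i : ℝ)) + 1 ≤ (a j : ℝ) := by exact_mod_cast hz
        linarith
      nlinarith
    calc tropTerm1 c a v j = tropTerm1 c a w j * Real.exp (-((a j : ℝ) * d'')) := hvj
      _ ≤ tropTerm1 c a w i * (Real.exp (-((a i : ℝ) * d'')) * Real.exp (-d')) := by
          have h1 := (Real.exp_pos (-((a j : ℝ) * d''))).le
          have h2 := (tropTerm1_pos c a hc w i).le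
          calc tropTerm1 c a w j * Real.exp (-((a j : ℝ) * d''))
              ≤ tropTerm1 c a w i * Real.exp (-((a j : ℝ) * d'')) :=
                mul_le_mul_of_nonneg_right hcomp h1
            _ ≤ tropTerm1 c a w i * (Real.exp (-((a i : ℝ) * d'')) * Real.exp (-d')) :=
                mul_le_mul_of_nonneg_left hexp h2
      _ = tropTerm1 c a v i * Real.exp (-d') := by rw [hvi]; ring

/-- slopes of maximizers are monotone. -/
lemma slope_mono (hc : ∀ i, c i ≠ 0) (u1 u2 : ℝ) (h12 : u1 < u2) (i1 i2 : Fin t)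
    (h1 : ∀ l, tropTerm1 c a u1 l ≤ tropTerm1 c a u1 i1)
    (h2 : ∀ l, tropTerm1 c a u2 l ≤ tropTerm1 c a u2 i2) : a i1 ≤ a i2 := by
  have A := h1 i2
  have B := h2 i1
  unfold tropTerm1 at A B
  have hc1 : (0:ℝ) < ‖c i1‖ := norm_pos_iff.2 (hc i1)
  have hc2 : (0:ℝ) < ‖c i2‖ := norm_pos_iff.2 (hc i2)
  have hprod : ‖c i2‖ * Real.exp ((a i2 : ℝ) * u1)
      * (‖c i1‖ * Real.exp ((a i1 : ℝ) * u2))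
      ≤ ‖c i1‖ * Real.exp ((a i1 : ℝ) * u1)
      * (‖c i2‖ * Real.exp ((a i2 : ℝ) * u2)) := by
    apply mul_le_mul A B (by positivity) (by positivity)
  have hexp : Real.exp ((a i2 : ℝ) * u1 + (a i1 : ℝ) * u2)
      ≤ Real.exp ((a i1 : ℝ) * u1 + (a i2 : ℝ) * u2) := by
    rw [Real.exp_add, Real.exp_add]
    have hcc : (0:ℝ) < ‖c i1‖ * ‖c i2‖ := mul_pos hc1 hc2
    nlinarith [Real.exp_pos ((a i2 : ℝ) * u1), Real.exp_pos ((a i1 : ℝ) * u2),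
      Real.exp_pos ((a i1 : ℝ) * u1), Real.exp_pos ((a i2 : ℝ) * u2)]
  have := Real.exp_le_exp.1 hexp
  have hreal : (a i1 : ℝ) ≤ (a i2 : ℝ) := by nlinarith
  exact_mod_cast hreal

lemma across (ha : StrictMono a) (hc : ∀ i, c i ≠ 0) (σ : ℝ) (hσ : σ ∈ ArchTrop1 c a)
    (v1 v2 : ℝ) (h1σ : v1 < σ) (hσ2 : σ < v2) (i1 i2 : Fin t)
    (h1 : ∀ l, tropTerm1 c a v1 l ≤ tropTerm1 c a v1 i1)
    (h2 : ∀ l, tropTerm1 c a v2 l ≤ tropTerm1 c a v2 i2) : a i1 < a i2 := by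
  obtain ⟨p, q, hpq, hmaxp, heq⟩ := hσ
  have hmaxq : ∀ l, tropTerm1 c a σ l ≤ tropTerm1 c a σ q := fun l => heq ▸ hmaxp l
  have hapq : a p ≠ a q := fun h => hpq (ha.injective h)
  have e1 : a i1 ≤ a p := slope_mono c a hc v1 σ h1σ i1 p h1 hmaxp
  have e2 : a i1 ≤ a q := slope_mono c a hc v1 σ h1σ i1 q h1 hmaxq
  have e3 : a p ≤ a i2 := slope_mono c a hc σ v2 hσ2 p i2 hmaxp h2
  have e4 : a q ≤ a i2 := slope_mono c a hc σ v2 hσ2 q i2 hmaxq h2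
  rcases lt_or_gt_of_ne hapq with h | h
  · exact lt_of_le_of_lt e1 (lt_of_lt_of_le h e4)
  · exact lt_of_le_of_lt e2 (lt_of_lt_of_le h e3)

lemma archtrop_finite (ha : StrictMono a) (hc : ∀ i, c i ≠ 0) : (ArchTrop1 c a).Finite := by
  classical
  have hsub : ArchTrop1 c a ⊆ ⋃ p : Fin t × Fin t,
      {v | p.1 ≠ p.2 ∧ tropTerm1 c a v p.1 = tropTerm1 c a v p.2} := by
    intro v hv
    obtain ⟨i, k, hik, -, heq⟩ := hv
    exact Set.mem_iUnion.2 ⟨(i, k), hik, heq⟩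
  refine Set.Finite.subset (Set.finite_iUnion (fun p => ?_)) hsub
  rcases eq_or_ne p.1 p.2 with h | h
  · convert Set.finite_empty
    ext v
    simp [h]
  · apply Set.Subsingleton.finite
    intro v hv w hw
    have hap : a p.1 ≠ a p.2 := fun hs => h (ha.injective hs)
    have hv' := hv.2
    have hw' := hw.2
    unfold tropTerm1 at hv' hw'
    have hc1 : (0:ℝ) < ‖c p.1‖ := norm_pos_iff.2 (hc p.1)
    have hc2 : (0:ℝ) < ‖c p.2‖ := norm_pos_iff.2 (hc p.2)
    have hlog_v : Real.log (‖c p.1‖) + (a p.1 : ℝ) * v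
        = Real.log (‖c p.2‖) + (a p.2 : ℝ) * v := by
      have := congrArg Real.log hv'
      rwa [Real.log_mul hc1.ne' (Real.exp_pos _).ne', Real.log_mul hc2.ne' (Real.exp_pos _).ne',
        Real.log_exp, Real.log_exp] at this
    have hlog_w : Real.log (‖c p.1‖) + (a p.1 : ℝ) * w
        = Real.log (‖c p.2‖) + (a p.2 : ℝ) * w := by
      have := congrArg Real.log hw'
      rwa [Real.log_mul hc1.ne' (Real.exp_pos _).ne', Real.log_mul hc2.ne' (Real.exp_pos _).ne',
        Real.log_exp, Real.log_exp] at this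
    have hreal : ((a p.1 : ℝ) - (a p.2 : ℝ)) * v = ((a p.1 : ℝ) - (a p.2 : ℝ)) * w := by
      linarith
    have hne : (a p.1 : ℝ) - (a p.2 : ℝ) ≠ 0 := by
      intro h0
      apply hap
      have : (a p.1 : ℝ) = (a p.2 : ℝ) := by linarith
      exact_mod_cast this
    exact mul_left_cancel₀ hne hreal

end Trop

section Pigeonhole

lemma gap_left (A : Set ℝ) (hA : A.Finite) (σ : ℝ) (hσ : σ ∈ A) (ℓ : ℕ)
    (hcard : A.ncard = ℓ) (ε δ : ℝ) (hε : 0 ≤ ε) (hδ : 0 < δ) :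
    ∃ v, v < σ ∧ σ - v ≤ (2 * (ℓ:ℝ) - 1) * (ε + δ)
      ∧ ∀ x ∈ A, x ∉ Set.Ioo (v - (ε + δ/2)) (v + (ε + δ/2)) := by
  classical
  have hεδ : 0 < ε + δ := by linarith
  set F : Finset ℝ := hA.toFinset with hF
  have hσF : σ ∈ F := by rw [hF, Set.Finite.mem_toFinset]; exact hσ
  have hFcard : F.card = ℓ := by rw [hF, ← Set.ncard_eq_toFinset_card _ hA]; exact hcard
  have hl1 : 1 ≤ ℓ := by
    rw [← hFcard]
    exact Finset.card_pos.2 ⟨σ, hσF⟩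
  set cand : ℕ → ℝ := fun j => σ - (2 * (j:ℝ) + 1) * (ε + δ) with hcand
  by_cases hex : ∃ j ∈ Finset.range ℓ, ∀ x ∈ A, x ∉ Set.Ioo (cand j - (ε + δ/2)) (cand j + (ε + δ/2))
  · obtain ⟨j, hj, hgood⟩ := hex
    refine ⟨cand j, ?_, ?_, hgood⟩
    · rw [hcand]
      simp only
      nlinarith [Nat.cast_nonneg (α := ℝ) j]
    · rw [hcand]
      simp only
      have hjl : (j:ℝ) ≤ (ℓ:ℝ) - 1 := by
        have : j + 1 ≤ ℓ := Finset.mem_range.1 hj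
        have : (j:ℝ) + 1 ≤ (ℓ:ℝ) := by exact_mod_cast this
        linarith
      nlinarith
  · exfalso
    push_neg at hex
    -- each candidate ball contains a point of A; pigeonhole
    set f : ℕ → ℝ := fun j =>
      if h : ∃ x ∈ A, x ∈ Set.Ioo (cand j - (ε + δ/2)) (cand j + (ε + δ/2)) then h.choose else 0
      with hf
    have hfspec : ∀ j ∈ Finset.range ℓ, f j ∈ A ∧
        f j ∈ Set.Ioo (cand j - (ε + δ/2)) (cand j + (ε + δ/2)) := by
      intro j hj
      obtain ⟨x, hxA, hxI⟩ := hex j hj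
      have hhex : ∃ x ∈ A, x ∈ Set.Ioo (cand j - (ε + δ/2)) (cand j + (ε + δ/2)) := ⟨x, hxA, hxI⟩
      rw [hf]
      simp only [dif_pos hhex]
      exact ⟨hhex.choose_spec.1, hhex.choose_spec.2⟩
    have hmaps : ∀ j ∈ Finset.range ℓ, f j ∈ F.erase σ := by
      intro j hj
      obtain ⟨hfA, hfI⟩ := hfspec j hj
      refine Finset.mem_erase.2 ⟨?_, by rw [hF, Set.Finite.mem_toFinset]; exact hfA⟩
      intro heqσ
      have h1 := hfI.1
      have h2 := hfI.2
      rw [heqσ, hcand] at h1 h2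
      simp only at h1 h2
      nlinarith [Nat.cast_nonneg (α := ℝ) j]
    have hcardlt : (F.erase σ).card < (Finset.range ℓ).card := by
      rw [Finset.card_erase_of_mem hσF, hFcard, Finset.card_range]
      omega
    obtain ⟨j, hjmem, k, hkmem, hjk, hfeq⟩ :=
      Finset.exists_ne_map_eq_of_card_lt_of_maps_to hcardlt hmaps
    have hIj := (hfspec j hjmem).2
    have hIk := (hfspec k hkmem).2
    rw [hfeq] at hIj
    have hcd : |cand j - cand k| = 2 * |(j:ℝ) - (k:ℝ)| * (ε + δ) := by
      rw [hcand]
      simp only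
      rw [show σ - (2*(j:ℝ)+1)*(ε+δ) - (σ - (2*(k:ℝ)+1)*(ε+δ)) = (2*((k:ℝ)-(j:ℝ)))*(ε+δ) by ring,
        abs_mul, abs_mul, _root_.abs_two, abs_of_pos hεδ, abs_sub_comm]
    have hjk1 : (1:ℝ) ≤ |(j:ℝ) - (k:ℝ)| := by
      rcases Nat.lt_or_ge j k with h | h
      · have : (j:ℝ) + 1 ≤ (k:ℝ) := by exact_mod_cast h
        rw [abs_sub_comm, _root_.abs_of_nonneg (by linarith)]
        linarith
      · have hlt : k < j := by omega
        have : (k:ℝ) + 1 ≤ (j:ℝ) := by exact_mod_cast hlt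
        rw [_root_.abs_of_nonneg (by linarith)]
        linarith
    have htri : |cand j - cand k| < 2 * (ε + δ/2) := by
      have a1 := hIj.1
      have a2 := hIj.2
      have a3 := hIk.1
      have a4 := hIk.2
      rw [abs_lt]
      constructor <;> linarith
    rw [hcd] at htri
    nlinarith

lemma gap_right (A : Set ℝ) (hA : A.Finite) (σ : ℝ) (hσ : σ ∈ A) (ℓ : ℕ)
    (hcard : A.ncard = ℓ) (ε δ : ℝ) (hε : 0 ≤ ε) (hδ : 0 < δ) :
    ∃ v, σ < v ∧ v - σ ≤ (2 * (ℓ:ℝ) - 1) * (ε + δ)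
      ∧ ∀ x ∈ A, x ∉ Set.Ioo (v - (ε + δ/2)) (v + (ε + δ/2)) := by
  have hAneg : ((fun x : ℝ => -x) '' A).Finite := hA.image _
  have hσneg : -σ ∈ (fun x : ℝ => -x) '' A := ⟨σ, hσ, rfl⟩
  have hcardneg : ((fun x : ℝ => -x) '' A).ncard = ℓ := by
    rw [Set.ncard_image_of_injective _ neg_injective]; exact hcard
  obtain ⟨v, hv1, hv2, hv3⟩ := gap_left _ hAneg (-σ) hσneg ℓ hcardneg ε δ hε hδ
  refine ⟨-v, by linarith, by linarith, ?_⟩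
  intro x hx hmem
  refine hv3 (-x) ⟨x, hx, rfl⟩ ?_
  obtain ⟨h1, h2⟩ := hmem
  exact ⟨by linarith, by linarith⟩

end Pigeonhole

/-- If `ArchTrop(f)` has exactly `ℓ` points, then every `σ ∈ ArchTrop(f)` is within distance
`(2ℓ-1)·log(t-1)` of `log|ζ|` for some nonzero root `ζ` of `f`. -/
theorem stmt15 {t : ℕ} (ht : 2 ≤ t) (ℓ : ℕ)
    (c : Fin t → ℂ) (a : Fin t → ℤ) (ha : StrictMono a) (hc : ∀ i, c i ≠ 0)
    (hcard : (ArchTrop1 c a).ncard = ℓ) :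
    ∀ σ ∈ ArchTrop1 c a, ∃ ζ : ℂ, ζ ≠ 0 ∧ upoly c a ζ = 0 ∧
      |σ - Real.log (‖ζ‖)| ≤ (2 * (ℓ : ℝ) - 1) * Real.log ((t : ℝ) - 1) := by
  classical
  intro σ hσ
  have ht0 : 0 < t := by omega
  set i0 : Fin t := ⟨0, ht0⟩ with hi0
  set n : Fin t → ℕ := fun i => (a i - a i0).toNat with hn
  have hn_cast : ∀ i, (n i : ℤ) = a i - a i0 := by
    intro i
    rw [hn]
    exact Int.toNat_of_nonneg (sub_nonneg.2 (ha.monotone (by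
      rw [Fin.le_def]; exact Nat.zero_le _)))
  set g : Polynomial ℂ := ∑ i, Polynomial.C (c i) * Polynomial.X ^ (n i) with hg
  have hcoeff : ∀ i, g.coeff (n i) = c i := by
    intro i
    rw [hg, Polynomial.finset_sum_coeff]
    rw [Finset.sum_eq_single i]
    · simp [Polynomial.coeff_C_mul, Polynomial.coeff_X_pow]
    · intro j _ hji
      rw [Polynomial.coeff_C_mul, Polynomial.coeff_X_pow, if_neg, mul_zero]
      intro hnm
      apply hji
      apply ha.injective
      have h1 := hn_cast i
      have h2 := hn_cast j
      have : (n i : ℤ) = (n j : ℤ) := by exact_mod_cast congrArg (Nat.cast : ℕ → ℤ) hnm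
      omega
    · intro h; exact absurd (Finset.mem_univ i) h
  have hg0 : g ≠ 0 := fun h => hc i0 (by rw [← hcoeff i0, h, Polynomial.coeff_zero])
  have hn00 : n i0 = 0 := by rw [hn]; simp
  have geval : ∀ z, g.eval z = ∑ i, c i * z ^ (n i) := by
    intro z; rw [hg, Polynomial.eval_finset_sum]; simp
  have hroot0 : ∀ ζ ∈ g.roots, ζ ≠ 0 := by
    intro ζ hζ h0
    have hev := (Polynomial.mem_roots hg0).1 hζ
    rw [Polynomial.IsRoot, h0] at hev
    have : g.coeff 0 = c i0 := by rw [← hn00]; exact hcoeff i0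
    rw [Polynomial.coeff_zero_eq_eval_zero] at this
    exact hc i0 (this ▸ hev)
  have hupoly : ∀ z : ℂ, z ≠ 0 → upoly c a z = z ^ (a i0) * g.eval z := by
    intro z hz
    rw [geval, Finset.mul_sum]
    unfold upoly
    apply Finset.sum_congr rfl
    intro i _
    have hzp : z ^ (a i) = z ^ (a i0) * z ^ ((n i : ℤ)) := by
      rw [← zpow_add₀ hz]
      congr 1
      rw [hn_cast i]
      ring
    rw [hzp, zpow_natCast]
    ring
  set ε := Real.log ((t:ℝ) - 1) with hε
  have ht2R : (2:ℝ) ≤ (t:ℝ) := by exact_mod_cast ht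
  have ht1R : (1:ℝ) ≤ (t:ℝ) - 1 := by linarith
  have ht1R0 : (0:ℝ) < (t:ℝ) - 1 := by linarith
  have hε0 : 0 ≤ ε := Real.log_nonneg ht1R
  have hAfin := archtrop_finite c a ha hc
  have hl1 : 1 ≤ ℓ := by
    rw [← hcard]
    exact (Set.ncard_pos hAfin).2 ⟨σ, hσ⟩
  have hl1R : (1:ℝ) ≤ (ℓ:ℝ) := by exact_mod_cast hl1
  -- main step: for every positive δ there is a root within (2ℓ-1)(ε+δ)
  have step : ∀ δ : ℝ, 0 < δ → ∃ ζ ∈ g.roots,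
      |σ - Real.log (‖ζ‖)| ≤ (2 * (ℓ:ℝ) - 1) * (ε + δ) := by
    intro δ hδ
    obtain ⟨v1, hv1lt, hv1b, hv1gap⟩ := gap_left _ hAfin σ hσ ℓ hcard ε δ hε0 hδ
    obtain ⟨v2, hv2lt, hv2b, hv2gap⟩ := gap_right _ hAfin σ hσ ℓ hcard ε δ hε0 hδ
    set d : ℝ := ε + δ/2 with hd
    have hd0 : 0 < d := by rw [hd]; linarith
    obtain ⟨i1, hi1⟩ := exists_strict_argmax c a ht0 hc v1 d hd0 hv1gap
    obtain ⟨i2, hi2⟩ := exists_strict_argmax c a ht0 hc v2 d hd0 hv2gap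
    have hv1mem : v1 ∈ Set.Ioo (v1 - d) (v1 + d) := ⟨by linarith, by linarith⟩
    have hv2mem : v2 ∈ Set.Ioo (v2 - d) (v2 + d) := ⟨by linarith, by linarith⟩
    have hmax1 : ∀ l, tropTerm1 c a v1 l ≤ tropTerm1 c a v1 i1 := by
      intro l
      rcases eq_or_ne l i1 with h | h
      · rw [h]
      · exact (hi1 v1 hv1mem l h).le
    have hmax2 : ∀ l, tropTerm1 c a v2 l ≤ tropTerm1 c a v2 i2 := by
      intro l
      rcases eq_or_ne l i2 with h | h
      · rw [h]
      · exact (hi2 v2 hv2mem l h).le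
    set d' : ℝ := ε + δ/4 with hd'
    have hkey : ∀ (v : ℝ) (i : Fin t),
        (∀ w ∈ Set.Ioo (v - d) (v + d), ∀ j, j ≠ i →
          tropTerm1 c a w j < tropTerm1 c a w i) →
        ∑ j ∈ Finset.univ.erase i, tropTerm1 c a v j < tropTerm1 c a v i := by
      intro v i hi
      have hbound : ∀ j ∈ Finset.univ.erase i,
          tropTerm1 c a v j ≤ tropTerm1 c a v i * Real.exp (-d') := fun j hj =>
        dominance c a ha hc v d hd0 i hi d' (by rw [hd']; linarith)
          (by rw [hd', hd]; linarith) j (Finset.mem_erase.1 hj).1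
      have hsum := Finset.sum_le_card_nsmul _ _ _ hbound
      rw [Finset.card_erase_of_mem (Finset.mem_univ i), Finset.card_univ, Fintype.card_fin,
        nsmul_eq_mul] at hsum
      have hexplt : Real.exp (-d') < ((t:ℝ) - 1)⁻¹ := by
        rw [← Real.exp_log ht1R0, ← Real.exp_neg, Real.exp_lt_exp]
        rw [hd', hε]
        linarith
      have hcast : ((t - 1 : ℕ) : ℝ) = (t:ℝ) - 1 := by
        have : 1 ≤ t := by omega
        push_cast [Nat.cast_sub this]
        ring
      have hTpos := tropTerm1_pos c a hc v i
      calc ∑ j ∈ Finset.univ.erase i, tropTerm1 c a v j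
          ≤ ((t - 1 : ℕ) : ℝ) * (tropTerm1 c a v i * Real.exp (-d')) := hsum
        _ = ((t:ℝ) - 1) * Real.exp (-d') * tropTerm1 c a v i := by rw [hcast]; ring
        _ < 1 * tropTerm1 c a v i := by
            apply mul_lt_mul_of_pos_right _ hTpos
            have : ((t:ℝ) - 1) * Real.exp (-d') < ((t:ℝ) - 1) * ((t:ℝ)-1)⁻¹ :=
              mul_lt_mul_of_pos_left hexplt ht1R0
            rwa [mul_inv_cancel₀ ht1R0.ne'] at this
        _ = tropTerm1 c a v i := one_mul _
    have count : ∀ (v : ℝ) (i : Fin t),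
        (∑ j ∈ Finset.univ.erase i, tropTerm1 c a v j < tropTerm1 c a v i) →
        (g.roots.filter (fun z => ‖z‖ < Real.exp v)).card = n i := by
      intro v i hsum
      apply rouche_count g (c i) (hc i) (n i) (Real.exp v) (Real.exp_pos v)
      intro z hz
      have habs_term : ∀ j, ‖c j * z ^ (n j)‖
          = tropTerm1 c a v j * Real.exp (-((a i0 : ℝ) * v)) := by
        intro j
        rw [norm_mul, norm_pow, hz]
        unfold tropTerm1
        rw [← Real.exp_nat_mul]
        have h1 : ((n j : ℝ)) = (a j : ℝ) - (a i0 : ℝ) := by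
          have h2 := congrArg (fun x : ℤ => (x : ℝ)) (hn_cast j)
          push_cast at h2
          exact h2
        rw [h1, mul_assoc, ← Real.exp_add]
        congr 2
        ring
      have hsub : g.eval z - c i * z ^ (n i) = ∑ j ∈ Finset.univ.erase i, c j * z ^ (n j) := by
        rw [geval, ← Finset.sum_erase_add Finset.univ _ (Finset.mem_univ i)]
        ring
      rw [hsub]
      have htri : ‖∑ j ∈ Finset.univ.erase i, c j * z ^ (n j)‖
          ≤ ∑ j ∈ Finset.univ.erase i, ‖c j * z ^ (n j)‖ := by
        exact
          norm_sum_le (Finset.univ.erase i) (fun j => c j * z ^ (n j))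
      calc ‖∑ j ∈ Finset.univ.erase i, c j * z ^ (n j)‖
          ≤ ∑ j ∈ Finset.univ.erase i, ‖c j * z ^ (n j)‖ := htri
        _ = (∑ j ∈ Finset.univ.erase i, tropTerm1 c a v j)
              * Real.exp (-((a i0 : ℝ) * v)) := by
            rw [Finset.sum_mul]
            exact Finset.sum_congr rfl (fun j _ => habs_term j)
        _ < tropTerm1 c a v i * Real.exp (-((a i0 : ℝ) * v)) :=
            mul_lt_mul_of_pos_right hsum (Real.exp_pos _)
        _ = ‖c i * z ^ (n i)‖ := (habs_term i).symm
    have hc1 := count v1 i1 (hkey v1 i1 hi1)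
    have hc2 := count v2 i2 (hkey v2 i2 hi2)
    have hlti : a i1 < a i2 := across c a ha hc σ hσ v1 v2 hv1lt hv2lt i1 i2 hmax1 hmax2
    have hnlt : n i1 < n i2 := by
      have h1 := hn_cast i1
      have h2 := hn_cast i2
      omega
    by_contra hno
    push_neg at hno
    have hall : ∀ x ∈ g.roots.filter (fun z => ‖z‖ < Real.exp v2),
        ‖x‖ < Real.exp v1 := by
      intro x hx
      rw [Multiset.mem_filter] at hx
      by_contra hge
      push_neg at hge
      have hxpos : 0 < ‖x‖ := lt_of_lt_of_le (Real.exp_pos v1) hge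
      have hlog1 : v1 ≤ Real.log (‖x‖) := by
        rw [← Real.log_exp v1]
        exact Real.log_le_log (Real.exp_pos _) hge
      have hlog2 : Real.log (‖x‖) ≤ v2 := by
        rw [← Real.log_exp v2]
        exact Real.log_le_log hxpos hx.2.le
      exact absurd (abs_le.2 ⟨by linarith, by linarith⟩) (not_le.2 (hno x hx.1))
    have hle : (g.roots.filter (fun z => ‖z‖ < Real.exp v2)).card
        ≤ (g.roots.filter (fun z => ‖z‖ < Real.exp v1)).card := by
      have h1 : (g.roots.filter (fun z => ‖z‖ < Real.exp v2)).filter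
          (fun z => ‖z‖ < Real.exp v1)
          = g.roots.filter (fun z => ‖z‖ < Real.exp v2) :=
        Multiset.filter_eq_self.2 hall
      calc (g.roots.filter (fun z => ‖z‖ < Real.exp v2)).card
          = ((g.roots.filter (fun z => ‖z‖ < Real.exp v2)).filter
              (fun z => ‖z‖ < Real.exp v1)).card := by rw [h1]
        _ ≤ (g.roots.filter (fun z => ‖z‖ < Real.exp v1)).card :=
            Multiset.card_le_card (Multiset.filter_le_filter _ (Multiset.filter_le _ _))
    rw [hc1, hc2] at hle
    omega
  -- conclusion from the main step
  by_contra hfinal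
  push_neg at hfinal
  have hroot_far : ∀ ζ ∈ g.roots, (2 * (ℓ:ℝ) - 1) * ε < |σ - Real.log (‖ζ‖)| := by
    intro ζ hζ
    have hζ0 : ζ ≠ 0 := hroot0 ζ hζ
    have hup : upoly c a ζ = 0 := by
      have hev := (Polynomial.mem_roots hg0).1 hζ
      rw [Polynomial.IsRoot] at hev
      rw [hupoly ζ hζ0, hev, mul_zero]
    exact hfinal ζ hζ0 hup
  obtain ⟨ζ0, hζ0mem, -⟩ := step 1 one_pos
  set Fr : Finset ℝ := g.roots.toFinset.image (fun ζ => |σ - Real.log (‖ζ‖)|)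
    with hFr
  have hFrne : Fr.Nonempty :=
    ⟨_, Finset.mem_image_of_mem _ (Multiset.mem_toFinset.2 hζ0mem)⟩
  set E := Fr.min' hFrne with hE
  have hEgt : (2 * (ℓ:ℝ) - 1) * ε < E := by
    obtain ⟨ζ, hζ, hval⟩ := Finset.mem_image.1 (Fr.min'_mem hFrne)
    rw [hE.symm] at hval
    rw [← hval]
    exact hroot_far ζ (Multiset.mem_toFinset.1 hζ)
  have hℓpos : (0:ℝ) < 2 * (ℓ:ℝ) := by linarith
  set δ := (E - (2 * (ℓ:ℝ) - 1) * ε) / (2 * (ℓ:ℝ)) with hδdef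
  have hδpos : 0 < δ := div_pos (by linarith) hℓpos
  obtain ⟨ζ, hζmem, hζb⟩ := step δ hδpos
  have hmin : E ≤ |σ - Real.log (‖ζ‖)| :=
    Fr.min'_le _ (Finset.mem_image_of_mem _ (Multiset.mem_toFinset.2 hζmem))
  have hδmul : (2 * (ℓ:ℝ)) * δ = E - (2 * (ℓ:ℝ) - 1) * ε := by
    rw [hδdef, mul_div_cancel₀ _ hℓpos.ne']
  nlinarith
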